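/- arXiv:2212.04814 — 2 statements merged into one kernel-verified Lean document; each statement's English description precedes it below -/
import Mathlib

section
/- The 2sls weights with instruments-as-controls equal the 2sls weights with single instruments: for each ℓ, w*_ℓ := (xᵀP_Z x)⁻¹ π̂_ℓ (z_ℓᵀx) arising from the decomposition β̂_2sls = Σ_ℓ w*_ℓ β̂*_ℓ with β̂*_ℓ = (z_ℓᵀy)/(z_ℓᵀx) coincides with the weight w_ℓ from the decomposition β̂_2sls = Σ_ℓ w_ℓ β̂_ℓ with β̂_ℓ = ψ̂_ℓ/π̂_ℓ; equivalently, both decompositions hold with the same coefficients: β̂_2sls = Σ_ℓ π̂_ℓ (z_ℓᵀx)(xᵀP_Z x)⁻¹ · β̂_ℓ = Σ_ℓ π̂_ℓ (z_ℓᵀx)(xᵀP_Z x)⁻¹ · β̂*_ℓ. -/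
open Matrix

/-- The 2SLS weights for the instruments-as-controls estimators β̂_ℓ = ψ̂_ℓ/π̂_ℓ
coincide with those for the single-instrument estimators β̂*_ℓ = (z_ℓᵀy)/(z_ℓᵀx):
both decompositions of β̂_2sls hold with the same coefficients
w_ℓ = π̂_ℓ (z_ℓᵀx)(xᵀP_Z x)⁻¹. -/
theorem stmt_11 {n k : ℕ} (Z : Matrix (Fin n) (Fin k) ℝ) (x y : Fin n → ℝ)
    (hZ : IsUnit (Zᵀ * Z).det)
    (hx : x ⬝ᵥ (Z * (Zᵀ * Z)⁻¹ * Zᵀ).mulVec x ≠ 0)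
    (hπ : ∀ ℓ, ((Zᵀ * Z)⁻¹.mulVec (Zᵀ.mulVec x)) ℓ ≠ 0)
    (hzx : ∀ ℓ, (fun i => Z i ℓ) ⬝ᵥ x ≠ 0) :
    (x ⬝ᵥ (Z * (Zᵀ * Z)⁻¹ * Zᵀ).mulVec x)⁻¹ * (x ⬝ᵥ (Z * (Zᵀ * Z)⁻¹ * Zᵀ).mulVec y) =
      (∑ ℓ, (((Zᵀ * Z)⁻¹.mulVec (Zᵀ.mulVec x)) ℓ * ((fun i => Z i ℓ) ⬝ᵥ x) *
          (x ⬝ᵥ (Z * (Zᵀ * Z)⁻¹ * Zᵀ).mulVec x)⁻¹) *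
        (((Zᵀ * Z)⁻¹.mulVec (Zᵀ.mulVec y)) ℓ / ((Zᵀ * Z)⁻¹.mulVec (Zᵀ.mulVec x)) ℓ)) ∧
    (x ⬝ᵥ (Z * (Zᵀ * Z)⁻¹ * Zᵀ).mulVec x)⁻¹ * (x ⬝ᵥ (Z * (Zᵀ * Z)⁻¹ * Zᵀ).mulVec y) =
      (∑ ℓ, (((Zᵀ * Z)⁻¹.mulVec (Zᵀ.mulVec x)) ℓ * ((fun i => Z i ℓ) ⬝ᵥ x) *
          (x ⬝ᵥ (Z * (Zᵀ * Z)⁻¹ * Zᵀ).mulVec x)⁻¹) *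
        (((fun i => Z i ℓ) ⬝ᵥ y) / ((fun i => Z i ℓ) ⬝ᵥ x))) := by
  set B := (Zᵀ * Z)⁻¹ with hB
  have hBsymm : Bᵀ = B := by
    rw [hB, Matrix.transpose_nonsing_inv, Matrix.transpose_mul, Matrix.transpose_transpose]
  have hzxcoord : ∀ ℓ, (Zᵀ.mulVec x) ℓ = (fun i => Z i ℓ) ⬝ᵥ x := by
    intro ℓ
    simp [Matrix.mulVec, dotProduct, Matrix.transpose_apply]
  have hzycoord : ∀ ℓ, (Zᵀ.mulVec y) ℓ = (fun i => Z i ℓ) ⬝ᵥ y := by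
    intro ℓ
    simp [Matrix.mulVec, dotProduct, Matrix.transpose_apply]
  have key : ∀ u v : Fin n → ℝ,
      u ⬝ᵥ (Z * B * Zᵀ).mulVec v = (Zᵀ.mulVec u) ⬝ᵥ B.mulVec (Zᵀ.mulVec v) := by
    intro u v
    rw [← Matrix.mulVec_mulVec, ← Matrix.mulVec_mulVec, Matrix.dotProduct_mulVec,
      ← Matrix.mulVec_transpose]
  have key2 : ∀ u v : Fin n → ℝ,
      (Zᵀ.mulVec u) ⬝ᵥ B.mulVec (Zᵀ.mulVec v) = (B.mulVec (Zᵀ.mulVec u)) ⬝ᵥ (Zᵀ.mulVec v) := by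
    intro u v
    rw [Matrix.dotProduct_mulVec, ← Matrix.mulVec_transpose, hBsymm]
  set S := x ⬝ᵥ (Z * B * Zᵀ).mulVec x with hS
  constructor
  · rw [key x y]
    rw [dotProduct, Finset.mul_sum]
    apply Finset.sum_congr rfl
    intro ℓ _
    rw [hzxcoord ℓ]
    have h : (B *ᵥ Zᵀ *ᵥ x) ℓ * ((B *ᵥ Zᵀ *ᵥ y) ℓ / (B *ᵥ Zᵀ *ᵥ x) ℓ)
        = (B *ᵥ Zᵀ *ᵥ y) ℓ := by
      rw [mul_comm]; exact div_mul_cancel₀ _ (hπ ℓ)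
    rw [show (B *ᵥ Zᵀ *ᵥ x) ℓ * (fun i => Z i ℓ) ⬝ᵥ x * S⁻¹ *
        ((B *ᵥ Zᵀ *ᵥ y) ℓ / (B *ᵥ Zᵀ *ᵥ x) ℓ)
        = (B *ᵥ Zᵀ *ᵥ x) ℓ * ((B *ᵥ Zᵀ *ᵥ y) ℓ / (B *ᵥ Zᵀ *ᵥ x) ℓ) *
          ((fun i => Z i ℓ) ⬝ᵥ x) * S⁻¹ from by ring, h]
    ring
  · rw [key x y, key2 x y]
    rw [dotProduct, Finset.mul_sum]
    apply Finset.sum_congr rfl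
    intro ℓ _
    rw [hzycoord ℓ]
    have h : ((fun i => Z i ℓ) ⬝ᵥ x) * ((fun i => Z i ℓ) ⬝ᵥ y / (fun i => Z i ℓ) ⬝ᵥ x)
        = (fun i => Z i ℓ) ⬝ᵥ y := by
      rw [mul_comm]; exact div_mul_cancel₀ _ (hzx ℓ)
    rw [show (B *ᵥ Zᵀ *ᵥ x) ℓ * (fun i => Z i ℓ) ⬝ᵥ x * S⁻¹ *
        ((fun i => Z i ℓ) ⬝ᵥ y / (fun i => Z i ℓ) ⬝ᵥ x)
        = ((fun i => Z i ℓ) ⬝ᵥ x) * ((fun i => Z i ℓ) ⬝ᵥ y / (fun i => Z i ℓ) ⬝ᵥ x) *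
          (B *ᵥ Zᵀ *ᵥ x) ℓ * S⁻¹ from by ring, h]
    ring
end

section
/- For k_z = 2 with data vectors z₁, z₂, x, y ∈ ℝⁿ: the 2sls weights on the pair (β̂₁, β̂₁*) equal the 2sls weights on the pair (β̂₂, β̂₂*). Concretely, letting z_{1|2} = M_{z₂}z₁, z_{2|1} = M_{z₁}z₂, the coefficient on β̂₁ in the representation β̂_2sls = w̃₁β̂₁ + w̃₂β̂₁* (using instruments [z_{1|2}, z₁]) equals the coefficient on β̂₂ in β̂_2sls = w̃₁β̂₂ + w̃₂β̂₂* (using instruments [z_{2|1}, z₂]). In particular, π̃_{1,1}·(z_{1|2}ᵀx) = −(xᵀz_{2|1})(z_{1|2}ᵀx)/(z₁ᵀz₂(1−φ̂₁₂φ̂₂₁)) = π̃_{2,1}·(z_{2|1}ᵀx). -/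
open Matrix

lemma inv2_mulVec_zero (a b c d u v : ℝ) (h : a*d - b*c ≠ 0) :
    ((!![a,b;c,d] : Matrix (Fin 2) (Fin 2) ℝ)⁻¹.mulVec ![u,v]) 0
      = (d*u - b*v)/(a*d - b*c) := by
  have hdet : (!![a,b;c,d] : Matrix (Fin 2) (Fin 2) ℝ).det ≠ 0 := by
    simpa [Matrix.det_fin_two_of] using h
  rw [Matrix.inv_def]
  simp [Matrix.adjugate_fin_two, Matrix.det_fin_two_of, Matrix.mulVec, dotProduct,
    Fin.sum_univ_two, Ring.inverse_eq_inv']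
  field_simp
  ring

/-- For k_z = 2: the 2SLS weight on β̂₁ (instruments [z_{1|2}, z₁]) equals the
weight on β̂₂ (instruments [z_{2|1}, z₂]); concretely,
π̃_{1,1}(z_{1|2}ᵀx) = −(xᵀz_{2|1})(z_{1|2}ᵀx)/(z₁ᵀz₂(1−φ̂₁₂φ̂₂₁)) = π̃_{2,1}(z_{2|1}ᵀx). -/
theorem stmt_18 {n : ℕ} (z₁ z₂ x : Fin n → ℝ)
    (hind : LinearIndependent ℝ ![z₁, z₂])
    (hz12 : z₁ ⬝ᵥ z₂ ≠ 0)
    (φ12 φ21 : ℝ)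
    (hφ12 : φ12 = (z₁ ⬝ᵥ z₂) / (z₁ ⬝ᵥ z₁))
    (hφ21 : φ21 = (z₂ ⬝ᵥ z₁) / (z₂ ⬝ᵥ z₂))
    (hφ : 1 - φ12 * φ21 ≠ 0)
    (z12 z21 : Fin n → ℝ)
    (hz12def : z12 = z₁ - φ21 • z₂)
    (hz21def : z21 = z₂ - φ12 • z₁) :
    ((!![z12 ⬝ᵥ z12, z12 ⬝ᵥ z₁; z₁ ⬝ᵥ z12, z₁ ⬝ᵥ z₁] : Matrix (Fin 2) (Fin 2) ℝ)⁻¹.mulVec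
          ![z12 ⬝ᵥ x, z₁ ⬝ᵥ x]) 0 * (z12 ⬝ᵥ x) =
        -((x ⬝ᵥ z21) * (z12 ⬝ᵥ x)) / ((z₁ ⬝ᵥ z₂) * (1 - φ12 * φ21)) ∧
      ((!![z12 ⬝ᵥ z12, z12 ⬝ᵥ z₁; z₁ ⬝ᵥ z12, z₁ ⬝ᵥ z₁] : Matrix (Fin 2) (Fin 2) ℝ)⁻¹.mulVec
          ![z12 ⬝ᵥ x, z₁ ⬝ᵥ x]) 0 * (z12 ⬝ᵥ x) =
        ((!![z21 ⬝ᵥ z21, z21 ⬝ᵥ z₂; z₂ ⬝ᵥ z21, z₂ ⬝ᵥ z₂] : Matrix (Fin 2) (Fin 2) ℝ)⁻¹.mulVec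
          ![z21 ⬝ᵥ x, z₂ ⬝ᵥ x]) 0 * (z21 ⬝ᵥ x) := by
  have ha : z₁ ⬝ᵥ z₁ ≠ 0 := by
    intro h
    have : z₁ = 0 := by simpa using (dotProduct_self_eq_zero).mp h
    exact hz12 (by simp [this])
  have hc : z₂ ⬝ᵥ z₂ ≠ 0 := by
    intro h
    have : z₂ = 0 := by simpa using (dotProduct_self_eq_zero).mp h
    exact hz12 (by simp [this])
  have h21 : z₂ ⬝ᵥ z₁ = z₁ ⬝ᵥ z₂ := dotProduct_comm _ _
  subst hz12def hz21def
  rw [h21] at hφ21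
  set a := z₁ ⬝ᵥ z₁ with ha'
  set b := z₁ ⬝ᵥ z₂ with hb'
  set c := z₂ ⬝ᵥ z₂ with hc'
  set p := z₁ ⬝ᵥ x with hp'
  set q := z₂ ⬝ᵥ x with hq'
  have e11 : (z₁ - φ21 • z₂) ⬝ᵥ (z₁ - φ21 • z₂) = a - φ21*b - φ21*b + φ21*φ21*c := by
    simp [sub_dotProduct, dotProduct_sub, smul_dotProduct, dotProduct_smul, smul_eq_mul,
      h21, ← ha', ← hb', ← hc']
    ring
  have e12 : (z₁ - φ21 • z₂) ⬝ᵥ z₁ = a - φ21*b := by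
    simp [sub_dotProduct, smul_dotProduct, smul_eq_mul, h21, ← ha', ← hb']
  have e21 : z₁ ⬝ᵥ (z₁ - φ21 • z₂) = a - φ21*b := by
    simp [dotProduct_sub, dotProduct_smul, smul_eq_mul, ← ha', ← hb']
  have e1x : (z₁ - φ21 • z₂) ⬝ᵥ x = p - φ21*q := by
    simp [sub_dotProduct, smul_dotProduct, smul_eq_mul, ← hp', ← hq']
  have f11 : (z₂ - φ12 • z₁) ⬝ᵥ (z₂ - φ12 • z₁) = c - φ12*b - φ12*b + φ12*φ12*a := by
    simp [sub_dotProduct, dotProduct_sub, smul_dotProduct, dotProduct_smul, smul_eq_mul,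
      h21, ← ha', ← hb', ← hc']
    ring
  have f12 : (z₂ - φ12 • z₁) ⬝ᵥ z₂ = c - φ12*b := by
    simp [sub_dotProduct, smul_dotProduct, smul_eq_mul, h21, ← hb', ← hc']
  have f21 : z₂ ⬝ᵥ (z₂ - φ12 • z₁) = c - φ12*b := by
    simp [dotProduct_sub, dotProduct_smul, smul_eq_mul, h21, ← hb', ← hc']
  have f1x : (z₂ - φ12 • z₁) ⬝ᵥ x = q - φ12*p := by
    simp [sub_dotProduct, smul_dotProduct, smul_eq_mul, ← hp', ← hq']
  have fx1 : x ⬝ᵥ (z₂ - φ12 • z₁) = q - φ12*p := by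
    simp [dotProduct_sub, dotProduct_smul, smul_eq_mul,
      dotProduct_comm x z₁, dotProduct_comm x z₂, ← hp', ← hq']
  rw [e11, e12, e21, e1x, f11, f12, f21, f1x, fx1]
  subst hφ12 hφ21
  clear_value a b c p q
  clear e11 e12 e21 e1x f11 f12 f21 f1x fx1 h21 ha' hb' hc' hp' hq' hind z₁ z₂ x
  have hφ' : a*c - b*b ≠ 0 := by
    intro h
    apply hφ
    field_simp
    linarith
  have hdet1 : (a - b/c*b - b/c*b + b/c*(b/c)*c) * a - (a - b/c*b) * (a - b/c*b) ≠ 0 := by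
    have : (a - b/c*b - b/c*b + b/c*(b/c)*c) * a - (a - b/c*b) * (a - b/c*b)
        = ((a*c - b*b)*(b*b))/(c*c) := by field_simp; ring
    rw [this]
    exact div_ne_zero (mul_ne_zero hφ' (mul_ne_zero hz12 hz12)) (mul_ne_zero hc hc)
  have hdet2 : (c - b/a*b - b/a*b + b/a*(b/a)*a) * c - (c - b/a*b) * (c - b/a*b) ≠ 0 := by
    have : (c - b/a*b - b/a*b + b/a*(b/a)*a) * c - (c - b/a*b) * (c - b/a*b)
        = ((a*c - b*b)*(b*b))/(a*a) := by field_simp; ring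
    rw [this]
    exact div_ne_zero (mul_ne_zero hφ' (mul_ne_zero hz12 hz12)) (mul_ne_zero ha ha)
  rw [inv2_mulVec_zero _ _ _ _ _ _ hdet1, inv2_mulVec_zero _ _ _ _ _ _ hdet2]
  have hden : (a*c - b*b)*b ≠ 0 := mul_ne_zero hφ' hz12
  have c1 : (a*(p - b/c*q) - (a - b/c*b)*(p)) /
      ((a - b/c*b - b/c*b + b/c*(b/c)*c) * a - (a - b/c*b) * (a - b/c*b))
      = (c*(b*p - a*q))/((a*c - b*b)*b) := by
    rw [div_eq_div_iff hdet1 hden]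
    field_simp
    ring
  have c2 : (c*(q - b/a*p) - (c - b/a*b)*(q)) /
      ((c - b/a*b - b/a*b + b/a*(b/a)*a) * c - (c - b/a*b) * (c - b/a*b))
      = (a*(b*q - c*p))/((a*c - b*b)*b) := by
    rw [div_eq_div_iff hdet2 hden]
    field_simp
    ring
  have hr : 1 - b/a*(b/c) = (a*c - b*b)/(a*c) := by field_simp
  rw [c1, c2, hr]
  constructor
  · field_simp
    ring
  · field_simp
    ring
end
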